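/- Let β > 0 and let Γ : ℝ → P(ℝ) be a set-valued map of the form Γ(v) = gsgn(Γ₋(v), v, Γ₊(v)) where Γ₊ and Γ₋ are continuous nonincreasing real functions with Γ₊(0) ≤ Γ₋(0). Then for every f̄ ∈ ℝ the inclusion βv + f̄ ∈ Γ(v) has exactly one solution v ∈ ℝ. -/

import Mathlib

open Set

/-- Normal cone of the closed interval `[A,B]` at `x`. -/
noncomputable def normalCone (A B x : ℝ) : Set ℝ :=
  if x = B then Set.Ici 0
  else if x = A then Set.Iic 0
  else if A < x ∧ x < B then {0} else (∅ : Set ℝ)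

/-- Normal cone of `[0,∞)` at `x`. -/
noncomputable def normalConeIci (x : ℝ) : Set ℝ :=
  if x = 0 then Set.Iic 0
  else if 0 < x then {0} else (∅ : Set ℝ)

/-- Normal cone of `(-∞,M]` at `P`. -/
noncomputable def normalConeIic (M P : ℝ) : Set ℝ :=
  if P = M then Set.Ici 0
  else if P < M then {0} else (∅ : Set ℝ)

/-- Generalized set-valued sign function. -/
noncomputable def gsgn (a y b : ℝ) : Set ℝ :=
  if 0 < y then {b}
  else if y < 0 then {a}
  else Set.Icc (min a b) (max a b)

/-- Projection onto `[A,B]`. -/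
noncomputable def proj (A B x : ℝ) : ℝ := max A (min B x)

/-- Signed square. -/
noncomputable def Ssq (x : ℝ) : ℝ := Real.sign x * x ^ 2

/-- Signed square root. -/
noncomputable def Rsq (x : ℝ) : ℝ := Real.sign x * Real.sqrt |x|

/-- The function `Φ_A` of the paper. -/
noncomputable def PhiA (b c a : ℝ) : ℝ :=
  -Real.sign c * ((Real.sqrt (a ^ 2 * b ^ 2 + 4 * a * |c|) - a * b) / 2)

lemma exists_pos_root (β : ℝ) (hβ : 0 < β) (Γ : ℝ → ℝ) (hc : Continuous Γ)
    (ha : Antitone Γ) (fb : ℝ) (h : fb < Γ 0) :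
    ∃ v, 0 < v ∧ β * v + fb = Γ v := by
  set M : ℝ := (Γ 0 - fb) / β with hMdef
  have hM0 : 0 < M := div_pos (by linarith) hβ
  have hφc : ContinuousOn (fun v => β * v + fb - Γ v) (Set.Icc 0 M) :=
    (by continuity : Continuous (fun v => β * v + fb - Γ v)).continuousOn
  have hMval : β * M = Γ 0 - fb := by rw [hMdef]; field_simp [hβ.ne']
  have h0' : (fun v => β * v + fb - Γ v) 0 < 0 := by simp; linarith
  have hMv : (0:ℝ) ≤ (fun v => β * v + fb - Γ v) M := by
    have := ha hM0.le
    simp only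
    linarith
  have hsub := intermediate_value_Icc hM0.le hφc
  obtain ⟨v, hvmem, hveq⟩ := hsub ⟨h0'.le, hMv⟩
  refine ⟨v, ?_, by simpa using sub_eq_zero.mp hveq⟩
  rcases hvmem.1.lt_or_eq with h' | h'
  · exact h'
  · exfalso; rw [← h'] at hveq; simp at hveq; linarith

theorem stmt_11 (β : ℝ) (hβ : 0 < β) (Γp Γm : ℝ → ℝ)
    (hΓpc : Continuous Γp) (hΓmc : Continuous Γm)
    (hΓp : Antitone Γp) (hΓm : Antitone Γm) (h0 : Γp 0 ≤ Γm 0) (fb : ℝ) :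
    ∃! v : ℝ, β * v + fb ∈ gsgn (Γm v) v (Γp v) := by
  have hmono : ∀ (Γ : ℝ → ℝ), Antitone Γ → StrictMono (fun v => β * v + fb - Γ v) := by
    intro Γ ha x y hxy
    have h1 : β * x < β * y := mul_lt_mul_of_pos_left hxy hβ
    have h2 : Γ y ≤ Γ x := ha hxy.le
    simp only
    linarith
  rcases lt_or_ge fb (Γp 0) with hB | hA1
  · -- case v > 0
    obtain ⟨v, hv, hveq⟩ := exists_pos_root β hβ Γp hΓpc hΓp fb hB
    refine ⟨v, ?_, ?_⟩
    · simp [gsgn, hv, hveq]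
    · intro w hw
      rcases lt_trichotomy w 0 with hw' | hw' | hw'
      · exfalso
        simp [gsgn, hw', not_lt.mpr hw'.le] at hw
        have h1 : Γm 0 ≤ Γm w := hΓm hw'.le
        nlinarith
      · exfalso
        subst hw'
        simp only [gsgn, lt_irrefl, if_false, min_eq_right h0, max_eq_left h0,
          Set.mem_Icc] at hw
        linarith [hw.1]
      · simp [gsgn, hw'] at hw
        exact (hmono Γp hΓp).injective
          (show β * w + fb - Γp w = β * v + fb - Γp v by linarith)
  rcases lt_or_ge (Γm 0) fb with hC | hA2
  · -- case v < 0, use reflection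
    have hneg : ∃ v, 0 < v ∧ β * v + (-fb) = -Γm (-v) := by
      apply exists_pos_root β hβ (fun v => -Γm (-v))
        (by continuity) ?_ (-fb) (by simpa using hC)
      intro x y hxy
      simp only [neg_le_neg_iff]
      exact hΓm (neg_le_neg hxy)
    obtain ⟨u, hu, hueq⟩ := hneg
    refine ⟨-u, ?_, ?_⟩
    · have hlt : (-u) < 0 := by linarith
      have hrw : β * (-u) + fb = Γm (-u) := by
        have : β * (-u) = -(β * u) := by ring
        linarith
      simp only [gsgn, if_neg (not_lt.mpr hlt.le), if_pos hlt,
        Set.mem_singleton_iff]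
      linarith [hrw, (by ring : β * -u = -(β * u))]
    · intro w hw
      rcases lt_trichotomy w 0 with hw' | hw' | hw'
      · simp [gsgn, hw', not_lt.mpr hw'.le] at hw
        have hirr := hmono Γm hΓm
        have h1 : β * (-u) + fb = Γm (-u) := by linarith
        have h2 : β * (-u) = -(β * u) := by ring
        have := hirr.injective (a₁ := w) (a₂ := -u)
          (show β * w + fb - Γm w = β * (-u) + fb - Γm (-u) by
            have h3 : β * -u = -(β * u) := by ring
            linarith)
        linarith [this]
      · exfalso
        subst hw'
        simp only [gsgn, lt_irrefl, if_false, min_eq_right h0, max_eq_left h0,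
          Set.mem_Icc] at hw
        linarith [hw.2]
      · exfalso
        simp [gsgn, hw'] at hw
        have h1 : Γp w ≤ Γp 0 := hΓp hw'.le
        nlinarith
  · -- case v = 0
    refine ⟨0, ?_, ?_⟩
    · simp only [gsgn, lt_irrefl, if_false, min_eq_right h0, max_eq_left h0,
        Set.mem_Icc, mul_zero, zero_add]
      exact ⟨hA1, hA2⟩
    · intro w hw
      rcases lt_trichotomy w 0 with hw' | hw' | hw'
      · exfalso
        simp [gsgn, hw', not_lt.mpr hw'.le] at hw
        have h1 : Γm 0 ≤ Γm w := hΓm hw'.le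
        nlinarith
      · exact hw'
      · exfalso
        simp [gsgn, hw'] at hw
        have h1 : Γp w ≤ Γp 0 := hΓp hw'.le
        nlinarith
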